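/- For every facility i ∈ F, the probability (over the random exponential clocks) that facility i is opened by the rounding algorithm is at most y_i; moreover, if i has at least one neighbor in the support graph, this probability equals y_i. -/

import Mathlib

/-!
STATEMENT 4: For every facility i ∈ F, the probability (over the random exponential clocks)
that facility i is opened by the rounding algorithm is at most y_i; moreover, if i has at
least one neighbor in the support graph, this probability equals y_i.
-/

open MeasureTheory ProbabilityTheory

section Helpers
open Real Set
open scoped ENNReal
open MeasureTheory ProbabilityTheory Real Set
open scoped ENNReal

lemma measurable_expPDF (r : ℝ) : Measurable (exponentialPDF r) :=
  (measurable_exponentialPDFReal r).ennreal_ofReal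

lemma expMeasure_apply {r : ℝ} {s : Set ℝ} (hs : MeasurableSet s) :
    expMeasure r s = ∫⁻ x in s, exponentialPDF r x := withDensity_apply _ hs

lemma expMeasure_singleton (r x : ℝ) : expMeasure r {x} = 0 := by
  rw [expMeasure_apply (measurableSet_singleton x)]
  simp [Real.volume_singleton]

lemma expMeasure_Iic {r : ℝ} (hr : 0 < r) (c : ℝ) :
    expMeasure r (Iic c) = ENNReal.ofReal (if 0 ≤ c then 1 - exp (-(r * c)) else 0) := by
  rw [expMeasure_apply measurableSet_Iic, lintegral_exponentialPDF_eq_antiDeriv hr]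

lemma expMeasure_Ioi {r : ℝ} (hr : 0 < r) {c : ℝ} (hc : 0 ≤ c) :
    expMeasure r (Ioi c) = ENNReal.ofReal (exp (-(r * c))) := by
  have h1 : IsProbabilityMeasure (expMeasure r) := isProbabilityMeasure_expMeasure hr
  have : Ioi c = (Iic c)ᶜ := by simp
  rw [this, prob_compl_eq_one_sub measurableSet_Iic, expMeasure_Iic hr, if_pos hc]
  have he : exp (-(r * c)) ≤ 1 := exp_le_one_iff.2 (by nlinarith)
  have he0 : (0:ℝ) ≤ exp (-(r * c)) := (exp_pos _).le
  rw [show (1:ℝ≥0∞) = ENNReal.ofReal 1 by simp, ← ENNReal.ofReal_sub _ (by linarith)]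
  norm_num

lemma expMeasure_prod_lt {a b : ℝ} (ha : 0 < a) (hb : 0 < b) :
    ((expMeasure a).prod (expMeasure b)) {p : ℝ × ℝ | p.1 < p.2}
      = ENNReal.ofReal (a / (a + b)) := by
  have h1 : IsProbabilityMeasure (expMeasure a) := isProbabilityMeasure_expMeasure ha
  have h2 : IsProbabilityMeasure (expMeasure b) := isProbabilityMeasure_expMeasure hb
  have hmeas : MeasurableSet {p : ℝ × ℝ | p.1 < p.2} :=
    measurableSet_lt measurable_fst measurable_snd
  rw [Measure.prod_apply hmeas]
  have hslice : ∀ q : ℝ, (Prod.mk q ⁻¹' {p : ℝ × ℝ | p.1 < p.2}) = Ioi q := by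
    intro q; ext m; simp [Set.mem_Ioi]
  simp_rw [hslice]
  rw [show expMeasure a = MeasureTheory.volume.withDensity (exponentialPDF a) from rfl]
  rw [lintegral_withDensity_eq_lintegral_mul_non_measurable _
    (measurable_expPDF a)
    (Filter.Eventually.of_forall fun x => ENNReal.ofReal_lt_top)]
  have key : (fun q => exponentialPDF a q * expMeasure b (Ioi q))
      = fun q => ENNReal.ofReal (a / (a + b)) * exponentialPDF (a + b) q := by
    funext q
    rcases lt_or_ge q 0 with hq | hq
    · rw [exponentialPDF_of_neg hq, exponentialPDF_of_neg hq]; simp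
    · rw [exponentialPDF_of_nonneg hq, exponentialPDF_of_nonneg hq, expMeasure_Ioi hb hq,
        ← ENNReal.ofReal_mul (by positivity), ← ENNReal.ofReal_mul (by positivity)]
      congr 1
      calc a * rexp (-(a * q)) * rexp (-(b * q)) = a * rexp (-(a * q) + -(b * q)) := by
            rw [Real.exp_add]; ring
        _ = a / (a + b) * ((a + b) * rexp (-((a + b) * q))) := by
            rw [show -(a*q) + -(b*q) = -((a+b)*q) by ring]; field_simp
  calc ∫⁻ q, exponentialPDF a q * expMeasure b (Ioi q)
      = ∫⁻ q, ENNReal.ofReal (a / (a + b)) * exponentialPDF (a + b) q := by rw [key]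
    _ = ENNReal.ofReal (a / (a + b)) * ∫⁻ q, exponentialPDF (a + b) q :=
        lintegral_const_mul _ (measurable_expPDF (a+b))
    _ = ENNReal.ofReal (a / (a + b)) := by
        rw [lintegral_exponentialPDF_eq_one (by linarith)]; ring

lemma expMeasure_prod_diag {a b : ℝ} (ha : 0 < a) (hb : 0 < b) :
    ((expMeasure a).prod (expMeasure b)) {p : ℝ × ℝ | p.1 = p.2} = 0 := by
  have h2 : IsProbabilityMeasure (expMeasure b) := isProbabilityMeasure_expMeasure hb
  have hmeas : MeasurableSet {p : ℝ × ℝ | p.1 = p.2} :=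
    measurableSet_eq_fun measurable_fst measurable_snd
  rw [Measure.prod_apply hmeas]
  have hslice : ∀ q : ℝ, (Prod.mk q ⁻¹' {p : ℝ × ℝ | p.1 = p.2}) = {q} := by
    intro q; ext m; simp [eq_comm]
  simp_rw [hslice, expMeasure_singleton, lintegral_zero]

open MeasureTheory ProbabilityTheory Real Set
open scoped ENNReal

lemma measurable_finset_inf' {ι α : Type*} [MeasurableSpace α] {t : Finset ι} (ht : t.Nonempty)
    {g : ι → α → ℝ} (hg : ∀ i ∈ t, Measurable (g i)) :
    Measurable (fun ω => t.inf' ht (fun i => g i ω)) := by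
  induction ht using Finset.Nonempty.cons_induction with
  | singleton i => simpa using hg i (Finset.mem_singleton_self i)
  | cons i t hit hts ih =>
    have h1 : Measurable (g i) := hg i (Finset.mem_cons_self i t)
    have h2 := ih (fun k hk => hg k (Finset.mem_cons_of_mem hk))
    have he : (fun ω => (Finset.cons i t hit).inf' (Finset.cons_nonempty hit) (fun k => g k ω))
        = fun ω => min (g i ω) (t.inf' hts (fun k => g k ω)) := by
      funext ω; exact Finset.inf'_cons (f := fun k => g k ω) hts
    exact he ▸ h1.min h2

/-- independent with exp laws ⇒ P(X < Y) = a/(a+b) -/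
lemma indep_exp_lt {Ω : Type*} [MeasurableSpace Ω] {μ : Measure Ω} [IsProbabilityMeasure μ]
    {X Y : Ω → ℝ} (hX : Measurable X) (hY : Measurable Y) (hXY : IndepFun X Y μ)
    {a b : ℝ} (ha : 0 < a) (hb : 0 < b)
    (hlawX : Measure.map X μ = expMeasure a) (hlawY : Measure.map Y μ = expMeasure b) :
    μ {ω | X ω < Y ω} = ENNReal.ofReal (a / (a + b)) := by
  have hmap : μ.map (fun ω => (X ω, Y ω)) = (μ.map X).prod (μ.map Y) :=
    (indepFun_iff_map_prod_eq_prod_map_map hX.aemeasurable hY.aemeasurable).1 hXY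
  have hs : MeasurableSet {p : ℝ × ℝ | p.1 < p.2} :=
    measurableSet_lt measurable_fst measurable_snd
  have : {ω | X ω < Y ω} = (fun ω => (X ω, Y ω)) ⁻¹' {p : ℝ × ℝ | p.1 < p.2} := rfl
  rw [this, ← Measure.map_apply (hX.prodMk hY) hs, hmap, hlawX, hlawY,
    expMeasure_prod_lt ha hb]

lemma indep_exp_eq {Ω : Type*} [MeasurableSpace Ω] {μ : Measure Ω} [IsProbabilityMeasure μ]
    {X Y : Ω → ℝ} (hX : Measurable X) (hY : Measurable Y) (hXY : IndepFun X Y μ)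
    {a b : ℝ} (ha : 0 < a) (hb : 0 < b)
    (hlawX : Measure.map X μ = expMeasure a) (hlawY : Measure.map Y μ = expMeasure b) :
    μ {ω | X ω = Y ω} = 0 := by
  have hmap : μ.map (fun ω => (X ω, Y ω)) = (μ.map X).prod (μ.map Y) :=
    (indepFun_iff_map_prod_eq_prod_map_map hX.aemeasurable hY.aemeasurable).1 hXY
  have hs : MeasurableSet {p : ℝ × ℝ | p.1 = p.2} :=
    measurableSet_eq_fun measurable_fst measurable_snd
  have : {ω | X ω = Y ω} = (fun ω => (X ω, Y ω)) ⁻¹' {p : ℝ × ℝ | p.1 = p.2} := rfl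
  rw [this, ← Measure.map_apply (hX.prodMk hY) hs, hmap, hlawX, hlawY,
    expMeasure_prod_diag ha hb]
lemma map_inf'_expMeasure {Ω ι : Type*} [MeasurableSpace Ω] {μ : Measure Ω}
    [IsProbabilityMeasure μ] {t : Finset ι} (ht : t.Nonempty) {g : ι → Ω → ℝ}
    (hg : ∀ i ∈ t, Measurable (g i)) {r : ι → ℝ} (hr : ∀ i ∈ t, 0 < r i)
    (hlaw : ∀ i ∈ t, Measure.map (g i) μ = expMeasure (r i))
    (hind : ∀ c : ℝ, μ (⋂ i ∈ t, g i ⁻¹' Ioi c) = ∏ i ∈ t, μ (g i ⁻¹' Ioi c)) :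
    Measure.map (fun ω => t.inf' ht fun i => g i ω) μ = expMeasure (∑ i ∈ t, r i) := by
  set b := ∑ i ∈ t, r i with hbdef
  have hb : 0 < b := Finset.sum_pos hr ht
  have hM : Measurable (fun ω => t.inf' ht fun i => g i ω) := measurable_finset_inf' ht hg
  have hprob : IsProbabilityMeasure (expMeasure b) := isProbabilityMeasure_expMeasure hb
  refine Measure.ext_of_Iic _ _ (fun c => ?_)
  rw [Measure.map_apply hM measurableSet_Iic, expMeasure_Iic hb]
  rcases lt_or_ge c 0 with hc | hc
  · rw [if_neg (not_le.2 hc), ENNReal.ofReal_zero]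
    have hsub : (fun ω => t.inf' ht fun i => g i ω) ⁻¹' Iic c ⊆ ⋃ i ∈ t, g i ⁻¹' Iic c := by
      intro ω hω
      obtain ⟨i, hi, hle⟩ := (Finset.inf'_le_iff (f := fun i => g i ω) (a := c) ht).1 (mem_Iic.1 hω)
      exact Set.mem_biUnion hi hle
    refine le_antisymm ?_ zero_le
    refine le_trans (measure_mono hsub) (le_trans (measure_biUnion_finset_le t _) ?_)
    have hz : ∀ i ∈ t, μ (g i ⁻¹' Iic c) = 0 := by
      intro i hi
      rw [← Measure.map_apply (hg i hi) measurableSet_Iic, hlaw i hi, expMeasure_Iic (hr i hi),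
        if_neg (not_le.2 hc), ENNReal.ofReal_zero]
    rw [Finset.sum_congr rfl hz, Finset.sum_const_zero]
  · rw [if_pos hc]
    have hGmeas : MeasurableSet (⋂ i ∈ t, g i ⁻¹' Ioi c) :=
      Finset.measurableSet_biInter t fun i hi => (hg i hi) measurableSet_Ioi
    have hco : (fun ω => t.inf' ht fun i => g i ω) ⁻¹' Iic c = (⋂ i ∈ t, g i ⁻¹' Ioi c)ᶜ := by
      ext ω
      simp only [Set.mem_preimage, mem_Iic, Set.mem_compl_iff, Set.mem_iInter, Set.mem_preimage,
        mem_Ioi]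
      rw [← not_lt, Finset.lt_inf'_iff]
    rw [hco, prob_compl_eq_one_sub hGmeas, hind c]
    have hval : ∀ i ∈ t, μ (g i ⁻¹' Ioi c) = ENNReal.ofReal (rexp (-(r i * c))) := by
      intro i hi
      rw [← Measure.map_apply (hg i hi) measurableSet_Ioi, hlaw i hi, expMeasure_Ioi (hr i hi) hc]
    rw [Finset.prod_congr rfl hval,
      ← ENNReal.ofReal_prod_of_nonneg (fun i _ => (exp_pos _).le), ← Real.exp_sum]
    have hsum : ∑ i ∈ t, -(r i * c) = -(b * c) := by
      rw [show (∑ i ∈ t, -(r i * c)) = -∑ i ∈ t, r i * c by simp, ← Finset.sum_mul]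
    rw [hsum]
    have he : rexp (-(b * c)) ≤ 1 := exp_le_one_iff.2 (by nlinarith)
    rw [show (1:ℝ≥0∞) = ENNReal.ofReal 1 by simp, ← ENNReal.ofReal_sub _ (exp_pos _).le]

end Helpers

namespace DFL4

noncomputable section

variable {F C : Type*}

/-- Facilities fractionally serving client `j` (neighborhood of `j` in the support graph). -/
def facNbrs [Fintype F] (x : F → C → ℝ) (j : C) : Finset F :=
  Finset.univ.filter fun i => 0 < x i j

/-- Clients fractionally served by facility `i` (neighborhood of `i` in the support graph). -/
def cliNbrs [Fintype C] (x : F → C → ℝ) (i : F) : Finset C :=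
  Finset.univ.filter fun j => 0 < x i j

/-- An element of a nonempty finset minimizing `f`. -/
def argminOn {α : Type*} (f : α → ℝ) (s : Finset α) (h : s.Nonempty) : α :=
  Classical.choose (s.exists_min_image f h)

/-- The connection graph: every vertex points to the neighbor (in the support graph of `x`)
with the smallest clock value (`Q` on facilities, `R` on clients). -/
def nextV [Fintype F] [Fintype C] (x : F → C → ℝ) (Q : F → ℝ) (R : C → ℝ) :
    F ⊕ C → Option (F ⊕ C)
  | Sum.inl i =>
    if h : (cliNbrs x i).Nonempty then some (Sum.inr (argminOn R _ h)) else none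
  | Sum.inr j =>
    if h : (facNbrs x j).Nonempty then some (Sum.inl (argminOn Q _ h)) else none

/-- Follow `next`, accumulating visited vertices and stopping just before revisiting one. -/
def pathAux {α : Type*} [DecidableEq α] (next : α → Option α) :
    ℕ → List α → α → List α
  | 0, vis, v => vis ++ [v]
  | n+1, vis, v =>
    match next v with
    | none => vis ++ [v]
    | some w => if w ∈ vis ++ [v] then vis ++ [v] else pathAux next n (vis ++ [v]) w

/-- The connection path of client `j`: start at `j` and repeatedly follow the unique outgoing
arc of the connection graph, stopping just before revisiting an already visited vertex. -/
def connPath [Fintype F] [Fintype C] [DecidableEq F] [DecidableEq C]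
    (x : F → C → ℝ) (Q : F → ℝ) (R : C → ℝ) (j : C) : List (F ⊕ C) :=
  pathAux (nextV x Q R) (Fintype.card F + Fintype.card C) List.nil (Sum.inr j)

/-- The path `p` traverses the arc `(u, v)`. -/
def traverses {α : Type*} (p : List α) (u v : α) : Prop :=
  ∃ l1 l2 : List α, p = l1 ++ u :: v :: l2

/-- The last facility on a path: the facility to which a client is assigned. -/
def assignedFac (p : List (F ⊕ C)) : Option F :=
  p.reverse.findSome? Sum.getLeft?

/-- Facility `i` lies on a 2-cycle of the connection graph, i.e. it is opened. -/
def opens [Fintype F] [Fintype C] (x : F → C → ℝ) (Q : F → ℝ) (R : C → ℝ) (i : F) : Prop :=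
  ∃ j : C, nextV x Q R (Sum.inl i) = some (Sum.inr j) ∧
    nextV x Q R (Sum.inr j) = some (Sum.inl i)

/-- A preprocessed fractional solution: `x i j ∈ {0, y i}`, `y i ∈ [0,1]`, and every client is
fully fractionally connected. -/
def Preprocessed [Fintype F] (x : F → C → ℝ) (y : F → ℝ) : Prop :=
  (∀ i j, x i j = 0 ∨ x i j = y i) ∧ (∀ i, y i ∈ Set.Icc (0:ℝ) 1) ∧ (∀ j, ∑ i, x i j = 1)

end

section EventHelpers

open MeasureTheory ProbabilityTheory Real Set
open scoped ENNReal


variable {ι Ω : Type*} [DecidableEq ι]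

/-- The event that `g i` is strictly smaller than all other clocks indexed by `s`. -/
def strictMinEv (g : ι → Ω → ℝ) (s : Finset ι) (i : ι) : Set Ω :=
  ⋂ (i' : ι) (_ : i' ∈ s.erase i), {ω | g i ω < g i' ω}

/-- The event that `g i` is at most all other clocks indexed by `s`. -/
def weakMinEv (g : ι → Ω → ℝ) (s : Finset ι) (i : ι) : Set Ω :=
  ⋂ (i' : ι) (_ : i' ∈ s.erase i), {ω | g i ω ≤ g i' ω}

/-- The event that two distinct clocks indexed by `s` are equal. -/
def tieEv (g : ι → Ω → ℝ) (s : Finset ι) : Set Ω :=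
  ⋃ (i : ι) (_ : i ∈ s) (i' : ι) (_ : i' ∈ s.erase i), {ω | g i ω = g i' ω}

lemma mem_strictMinEv {g : ι → Ω → ℝ} {s : Finset ι} {i : ι} {ω : Ω} :
    ω ∈ strictMinEv g s i ↔ ∀ i' ∈ s.erase i, g i ω < g i' ω := by
  simp [strictMinEv]

lemma mem_weakMinEv {g : ι → Ω → ℝ} {s : Finset ι} {i : ι} {ω : Ω} :
    ω ∈ weakMinEv g s i ↔ ∀ i' ∈ s.erase i, g i ω ≤ g i' ω := by
  simp [weakMinEv]

lemma weakMinEv_subset {g : ι → Ω → ℝ} {s : Finset ι} {i : ι} (hi : i ∈ s) :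
    weakMinEv g s i ⊆ strictMinEv g s i ∪ tieEv g s := by
  intro ω hω
  rw [mem_weakMinEv] at hω
  by_cases hst : ∀ i' ∈ s.erase i, g i ω < g i' ω
  · exact Or.inl (mem_strictMinEv.2 hst)
  · push_neg at hst
    obtain ⟨i', hi', hle⟩ := hst
    have heq : g i ω = g i' ω := le_antisymm (hω i' hi') hle
    exact Or.inr (Set.mem_biUnion hi (Set.mem_biUnion hi' heq))

lemma pairwiseDisjoint_strictMinEv (g : ι → Ω → ℝ) (s : Finset ι) :
    (↑s : Set ι).PairwiseDisjoint (strictMinEv g s) := by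
  intro i hi i' hi' hne
  refine Set.disjoint_left.2 fun ω hω hω' => ?_
  have h1 : g i ω < g i' ω :=
    mem_strictMinEv.1 hω i' (Finset.mem_erase.2 ⟨Ne.symm hne, hi'⟩)
  have h2 : g i' ω < g i ω :=
    mem_strictMinEv.1 hω' i (Finset.mem_erase.2 ⟨hne, hi⟩)
  exact absurd h1 (not_lt.2 h2.le)

lemma compl_biUnion_strictMinEv (g : ι → Ω → ℝ) {s : Finset ι} (hs : s.Nonempty) :
    (⋃ i ∈ s, strictMinEv g s i)ᶜ ⊆ tieEv g s := by
  intro ω hω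
  obtain ⟨i, hi, hmin⟩ := s.exists_min_image (fun i => g i ω) hs
  have hnot : ω ∉ strictMinEv g s i := fun h => hω (Set.mem_biUnion hi h)
  rw [mem_strictMinEv] at hnot
  push_neg at hnot
  obtain ⟨i', hi', hle⟩ := hnot
  have heq : g i ω = g i' ω := le_antisymm (hmin i' (Finset.mem_of_mem_erase hi')) hle
  exact Set.mem_biUnion hi (Set.mem_biUnion hi' heq)

lemma measure_tieEv_eq_zero {Ω : Type*} [MeasurableSpace Ω] {μ : MeasureTheory.Measure Ω}
    {g : ι → Ω → ℝ} {s : Finset ι}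
    (h : ∀ i ∈ s, ∀ i' ∈ s.erase i, μ {ω | g i ω = g i' ω} = 0) :
    μ (tieEv g s) = 0 := by
  refine le_antisymm ?_ zero_le
  refine le_trans (measure_biUnion_finset_le s _) ?_
  have h1 : ∀ i ∈ s, μ (⋃ (i' : ι) (_ : i' ∈ s.erase i), {ω | g i ω = g i' ω}) = 0 := by
    intro i hi
    refine le_antisymm (le_trans (measure_biUnion_finset_le _ _) ?_) zero_le
    rw [Finset.sum_congr rfl (h i hi), Finset.sum_const_zero]
  rw [Finset.sum_congr rfl h1, Finset.sum_const_zero]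

lemma argminOn_mem {α : Type*} (f : α → ℝ) (s : Finset α) (h : s.Nonempty) :
    argminOn f s h ∈ s := (Classical.choose_spec (s.exists_min_image f h)).1

lemma argminOn_le {α : Type*} (f : α → ℝ) (s : Finset α) (h : s.Nonempty) {b : α}
    (hb : b ∈ s) : f (argminOn f s h) ≤ f b :=
  (Classical.choose_spec (s.exists_min_image f h)).2 b hb

lemma argminOn_eq {α : Type*} [DecidableEq α] (f : α → ℝ) (s : Finset α) (h : s.Nonempty)
    {b : α} (hb : b ∈ s) (hlt : ∀ c ∈ s.erase b, f b < f c) : argminOn f s h = b := by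
  by_contra hne
  have h1 : argminOn f s h ∈ s.erase b := Finset.mem_erase.2 ⟨hne, argminOn_mem f s h⟩
  exact absurd (argminOn_le f s h hb) (not_le.2 (hlt _ h1))

lemma open_prob_eq
    {F C : Type*} [Fintype F] [Fintype C] [DecidableEq F] [DecidableEq C]
    (x : F → C → ℝ) (y : F → ℝ) (hxy : Preprocessed x y)
    {Ω : Type*} [MeasurableSpace Ω] (μ : Measure Ω) [IsProbabilityMeasure μ]
    (Q : F → Ω → ℝ) (R : C → Ω → ℝ)
    (hQmeas : ∀ i : F, 0 < y i → Measurable (Q i))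
    (hRmeas : ∀ j : C, Measurable (R j))
    (hindep : iIndepFun
      (fun v : {i : F // 0 < y i} ⊕ C => Sum.elim (fun i => Q i.1) R v) μ)
    (hQdist : ∀ i : F, (h : 0 < y i) → Measure.map (Q i) μ = expMeasure (y i))
    (hRdist : ∀ j : C, Measure.map (R j) μ = expMeasure 1)
    (i₀ : F) (hs : (cliNbrs x i₀).Nonempty) :
    μ {ω | opens x (fun i => Q i ω) (fun j => R j ω) i₀} = ENNReal.ofReal (y i₀) := by
  classical
  obtain ⟨hx01, hy01, hsum⟩ := hxy
  have hx_eq : ∀ {i : F} {j : C}, 0 < x i j → x i j = y i := fun {i j} h =>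
    (hx01 i j).resolve_left (fun h0 => by rw [h0] at h; exact lt_irrefl 0 h)
  have hx_pos : ∀ {i : F} {j : C}, 0 < x i j → 0 < y i := fun {i j} h => by
    have := hx_eq h; rwa [this] at h
  have mem_fac : ∀ {i : F} {j : C}, i ∈ facNbrs x j ↔ 0 < x i j := fun {i j} => by
    simp [facNbrs]
  have mem_cli : ∀ {i : F} {j : C}, j ∈ cliNbrs x i ↔ 0 < x i j := fun {i j} => by
    simp [cliNbrs]
  set s := cliNbrs x i₀ with hsdef
  obtain ⟨j₀, hj₀⟩ := hs
  have hi₀ : 0 < y i₀ := hx_pos (mem_cli.1 hj₀)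
  have hQi₀ : Measurable (Q i₀) := hQmeas i₀ hi₀
  have hgmeas : ∀ v : {i : F // 0 < y i} ⊕ C, Measurable (Sum.elim (fun i => Q i.1) R v) := by
    rintro (⟨i, hi⟩ | j)
    · exact hQmeas i hi
    · exact hRmeas j
  have hfac_pos : ∀ {i : F} {j : C}, i ∈ facNbrs x j → 0 < y i := fun {i j} h =>
    hx_pos (mem_fac.1 h)
  have hi₀fac : ∀ {j : C}, j ∈ s → i₀ ∈ facNbrs x j := fun {j} hj =>
    mem_fac.2 (mem_cli.1 hj)
  have hsfac : ∀ {j : C}, j ∈ s → ∑ i ∈ facNbrs x j, y i = 1 := by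
    intro j hj
    have h1 : ∑ i ∈ facNbrs x j, y i = ∑ i ∈ facNbrs x j, x i j :=
      Finset.sum_congr rfl fun i hi => (hx_eq (mem_fac.1 hi)).symm
    have h2 : ∑ i ∈ facNbrs x j, x i j = ∑ i, x i j := by
      refine Finset.sum_subset (Finset.subset_univ _) ?_
      intro i _ hi
      have hnotpos : ¬ 0 < x i j := fun hp => hi (mem_fac.2 hp)
      rcases hx01 i j with h | h
      · exact h
      · exact le_antisymm (not_lt.1 hnotpos) (by rw [h]; exact (hy01 i).1)
    rw [h1, h2, hsum j]
  have hs : s.Nonempty := ⟨j₀, hj₀⟩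
  -- the events
  set A : C → Set Ω := fun j => strictMinEv R s j with hAdef
  set B : C → Set Ω := fun j => strictMinEv Q (facNbrs x j) i₀ with hBdef
  set O := {ω | opens x (fun i => Q i ω) (fun j => R j ω) i₀} with hOdef
  -- measurability
  have hAmeas : ∀ j : C, MeasurableSet (A j) := fun j =>
    MeasurableSet.iInter fun j' => MeasurableSet.iInter fun _ =>
      measurableSet_lt (hRmeas j) (hRmeas j')
  have hBmeas : ∀ j : C, MeasurableSet (B j) := fun j =>
    MeasurableSet.iInter fun i => MeasurableSet.iInter fun hi =>
      measurableSet_lt hQi₀ (hQmeas i (hfac_pos (Finset.mem_of_mem_erase hi)))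
  -- pairwise null ties
  have pairIndep : ∀ u v : {i : F // 0 < y i} ⊕ C, u ≠ v →
      IndepFun (Sum.elim (fun i => Q i.1) R u) (Sum.elim (fun i => Q i.1) R v) μ :=
    fun u v huv => hindep.indepFun huv
  have hRRnull : ∀ j j' : C, j ≠ j' → μ {ω | R j ω = R j' ω} = 0 := by
    intro j j' hne
    exact indep_exp_eq (hRmeas j) (hRmeas j')
      (pairIndep (Sum.inr j) (Sum.inr j') (by simp [hne])) one_pos one_pos
      (hRdist j) (hRdist j')
  have hQQnull : ∀ i i' : F, i ≠ i' → ∀ (hi : 0 < y i) (hi' : 0 < y i'),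
      μ {ω | Q i ω = Q i' ω} = 0 := by
    intro i i' hne hi hi'
    exact indep_exp_eq (hQmeas i hi) (hQmeas i' hi')
      (pairIndep (Sum.inl ⟨i, hi⟩) (Sum.inl ⟨i', hi'⟩) (by simp [hne])) hi hi'
      (hQdist i hi) (hQdist i' hi')
  have hTieR0 : μ (tieEv R s) = 0 :=
    measure_tieEv_eq_zero fun j _ j' hj' =>
      hRRnull j j' (Ne.symm (Finset.ne_of_mem_erase hj'))
  have hTieQ0 : ∀ j : C, μ (tieEv Q (facNbrs x j)) = 0 := fun j =>
    measure_tieEv_eq_zero fun i hi i' hi' =>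
      hQQnull i i' (Ne.symm (Finset.ne_of_mem_erase hi')) (hfac_pos hi)
        (hfac_pos (Finset.mem_of_mem_erase hi'))
  -- sum of A-measures is one
  have hApd : (↑s : Set C).PairwiseDisjoint A := pairwiseDisjoint_strictMinEv R s
  have hsumA : ∑ j ∈ s, μ (A j) = 1 := by
    have hU : μ (⋃ j ∈ s, A j) = ∑ j ∈ s, μ (A j) :=
      measure_biUnion_finset hApd fun j _ => hAmeas j
    have hUc : μ (⋃ j ∈ s, A j)ᶜ = 0 :=
      le_antisymm (le_trans (measure_mono (compl_biUnion_strictMinEv R hs)) hTieR0.le)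
        zero_le
    have hmeasU : MeasurableSet (⋃ j ∈ s, A j) :=
      Finset.measurableSet_biUnion s fun j _ => hAmeas j
    rw [← hU]
    exact (prob_compl_eq_zero_iff hmeasU).1 hUc
  -- factorization of A ∩ B
  have hfact : ∀ j ∈ s, μ (A j ∩ B j) = μ (A j) * μ (B j) := by
    intro j hj
    set SF : Finset ({i : F // 0 < y i} ⊕ C) := Finset.univ.image Sum.inl with hSF
    set TC : Finset ({i : F // 0 < y i} ⊕ C) := Finset.univ.image Sum.inr with hTC
    have hST : Disjoint SF TC := by
      rw [Finset.disjoint_left]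
      rintro v hv hv'
      rw [hSF, Finset.mem_image] at hv
      rw [hTC, Finset.mem_image] at hv'
      obtain ⟨i, _, rfl⟩ := hv
      obtain ⟨j', _, h⟩ := hv'
      cases h
    have cF : ∀ (i : F) (h : 0 < y i), (Sum.inl ⟨i, h⟩ : {i : F // 0 < y i} ⊕ C) ∈ SF :=
      fun i h => Finset.mem_image_of_mem _ (Finset.mem_univ _)
    have cC : ∀ j : C, (Sum.inr j : {i : F // 0 < y i} ⊕ C) ∈ TC :=
      fun j => Finset.mem_image_of_mem _ (Finset.mem_univ _)
    have hXYind := hindep.indepFun_finset SF TC hST hgmeas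
    set SB : Set ({v // v ∈ SF} → ℝ) := ⋂ (i : F) (hi : i ∈ (facNbrs x j).erase i₀),
        {h | h ⟨Sum.inl ⟨i₀, hi₀⟩, cF i₀ hi₀⟩
          < h ⟨Sum.inl ⟨i, hfac_pos (Finset.mem_of_mem_erase hi)⟩,
              cF i (hfac_pos (Finset.mem_of_mem_erase hi))⟩} with hSBdef
    set SA : Set ({v // v ∈ TC} → ℝ) := ⋂ (j' : C) (_ : j' ∈ s.erase j),
        {h | h ⟨Sum.inr j, cC j⟩ < h ⟨Sum.inr j', cC j'⟩} with hSAdef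
    have hSBm : MeasurableSet SB :=
      MeasurableSet.iInter fun i => MeasurableSet.iInter fun hi =>
        measurableSet_lt (measurable_pi_apply _) (measurable_pi_apply _)
    have hSAm : MeasurableSet SA :=
      MeasurableSet.iInter fun j' => MeasurableSet.iInter fun hj' =>
        measurableSet_lt (measurable_pi_apply _) (measurable_pi_apply _)
    have hBpre : (fun ω (v : {v // v ∈ SF}) => Sum.elim (fun i => Q i.1) R v.1 ω) ⁻¹' SB
        = B j := by
      ext ω
      rw [hBdef]
      simp only [hSBdef, Set.mem_preimage, Set.mem_iInter, Set.mem_setOf_eq, strictMinEv]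
      rfl
    have hApre : (fun ω (v : {v // v ∈ TC}) => Sum.elim (fun i => Q i.1) R v.1 ω) ⁻¹' SA
        = A j := by
      ext ω
      rw [hAdef]
      simp only [hSAdef, Set.mem_preimage, Set.mem_iInter, Set.mem_setOf_eq, strictMinEv]
      rfl
    have hmul := hXYind.measure_inter_preimage_eq_mul SB SA hSBm hSAm
    rw [hBpre, hApre] at hmul
    rw [Set.inter_comm] at hmul
    rw [hmul, mul_comm]
  -- the value of μ (B j)
  have hBval : ∀ j ∈ s, μ (B j) = ENNReal.ofReal (y i₀) := by
    intro j hj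
    have hi₀f : i₀ ∈ facNbrs x j := hi₀fac hj
    have hsum1 : ∑ i ∈ facNbrs x j, y i = 1 := hsfac hj
    set t := (facNbrs x j).erase i₀ with htdef
    rcases t.eq_empty_or_nonempty with hte | ht
    · have hBuniv : B j = Set.univ := by
        rw [hBdef]
        ext ω
        simp only [strictMinEv, ← htdef, hte, Set.mem_iInter, Set.mem_univ, iff_true]
        intro i' hi'
        exact absurd hi' (Finset.notMem_empty i')
      have hfs : facNbrs x j = {i₀} := by
        refine Finset.eq_singleton_iff_unique_mem.2 ⟨hi₀f, fun i' hi' => ?_⟩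
        by_contra hne
        have : i' ∈ t := Finset.mem_erase.2 ⟨hne, hi'⟩
        rw [hte] at this
        exact absurd this (Finset.notMem_empty i')
      have hy1 : y i₀ = 1 := by rw [hfs] at hsum1; simpa using hsum1
      rw [hBuniv, measure_univ, hy1]
      simp
    · have hpos' : ∀ i : {i // i ∈ t}, 0 < y i.1 := fun i =>
        hfac_pos (Finset.mem_of_mem_erase i.2)
      have hQmt : ∀ i ∈ t.attach, Measurable (fun ω => Q i.1 ω) := fun i _ =>
        hQmeas i.1 (hpos' i)
      have hta : t.attach.Nonempty := ht.attach
      set M := fun ω => t.attach.inf' hta fun i => Q i.1 ω with hMdef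
      have hMmeas : Measurable M := measurable_finset_inf' hta hQmt
      have hind : ∀ c : ℝ, μ (⋂ i ∈ t.attach, (fun ω => Q i.1 ω) ⁻¹' Set.Ioi c)
          = ∏ i ∈ t.attach, μ ((fun ω => Q i.1 ω) ⁻¹' Set.Ioi c) := by
        intro c
        have hinj : ∀ a ∈ t.attach, ∀ b ∈ t.attach,
            (Sum.inl ⟨a.1, hpos' a⟩ : {i : F // 0 < y i} ⊕ C) = Sum.inl ⟨b.1, hpos' b⟩ →
              a = b :=
          fun a _ b _ h => by
            have h2 : (⟨a.1, hpos' a⟩ : {i : F // 0 < y i}) = ⟨b.1, hpos' b⟩ :=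
              Sum.inl_injective h
            have h3 : a.1 = b.1 := congrArg (Subtype.val : {i : F // 0 < y i} → F) h2
            exact Subtype.ext h3
        have hmain := hindep.measure_inter_preimage_eq_mul
          (S := t.attach.image fun i => Sum.inl ⟨i.1, hpos' i⟩)
          (sets := fun _ => Set.Ioi c) (fun _ _ => measurableSet_Ioi)
        rw [Finset.prod_image hinj] at hmain
        have hbi : (⋂ v ∈ t.attach.image
              (fun i => (Sum.inl ⟨i.1, hpos' i⟩ : {i : F // 0 < y i} ⊕ C)),
            (Sum.elim (fun i => Q i.1) R v) ⁻¹' Set.Ioi c)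
            = ⋂ i ∈ t.attach, (fun ω => Q i.1 ω) ⁻¹' Set.Ioi c := by
          ext ω
          simp only [Set.mem_iInter, Finset.mem_image, Set.mem_preimage]
          constructor
          · intro h i hi; exact h _ ⟨i, hi, rfl⟩
          · rintro h v ⟨i, hi, rfl⟩; exact h i hi
        rw [hbi] at hmain
        exact hmain
      have hlawM : Measure.map M μ = expMeasure (∑ i ∈ t.attach, y i.1) :=
        map_inf'_expMeasure hta hQmt (fun i _ => hpos' i)
          (fun i _ => hQdist i.1 (hpos' i)) hind
      have hbsum : ∑ i ∈ t.attach, y i.1 = 1 - y i₀ := by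
        rw [Finset.sum_attach t (fun i => y i)]
        have h2 : y i₀ + ∑ i ∈ t, y i = 1 := by
          rw [htdef, Finset.add_sum_erase _ _ hi₀f, hsum1]
        linarith
      have hbpos : 0 < ∑ i ∈ t.attach, y i.1 := Finset.sum_pos (fun i _ => hpos' i) hta
      set T1 := t.attach.image
        (fun i => (Sum.inl ⟨i.1, hpos' i⟩ : {i : F // 0 < y i} ⊕ C)) with hT1
      have hd : Disjoint ({Sum.inl ⟨i₀, hi₀⟩} : Finset ({i : F // 0 < y i} ⊕ C)) T1 := by
        rw [Finset.disjoint_singleton_left]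
        intro hmem
        rw [hT1, Finset.mem_image] at hmem
        obtain ⟨i, _, h⟩ := hmem
        have h2 : (⟨i.1, hpos' i⟩ : {i : F // 0 < y i}) = ⟨i₀, hi₀⟩ := Sum.inl_injective h
        have hii : i.1 = i₀ := congrArg (Subtype.val : {i : F // 0 < y i} → F) h2
        have : i₀ ∈ t := by rw [← hii]; exact i.2
        rw [htdef] at this
        exact Finset.notMem_erase i₀ _ this
      have hbase := hindep.indepFun_finset {Sum.inl ⟨i₀, hi₀⟩} T1 hd hgmeas
      have hidx : ∀ i : {i // i ∈ t},
          (Sum.inl ⟨i.1, hpos' i⟩ : {i : F // 0 < y i} ⊕ C) ∈ T1 := fun i =>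
        Finset.mem_image_of_mem _ (Finset.mem_attach _ _)
      have hQM : IndepFun (Q i₀) M μ := by
        have hφ : Measurable (fun h :
            {v // v ∈ ({Sum.inl ⟨i₀, hi₀⟩} : Finset ({i : F // 0 < y i} ⊕ C))} → ℝ =>
            h ⟨Sum.inl ⟨i₀, hi₀⟩, Finset.mem_singleton_self _⟩) := measurable_pi_apply _
        have hψ : Measurable (fun h : {v // v ∈ T1} → ℝ =>
            t.attach.inf' hta fun i => h ⟨Sum.inl ⟨i.1, hpos' i⟩, hidx i⟩) :=
          measurable_finset_inf' hta fun i _ => measurable_pi_apply _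
        exact hbase.comp hφ hψ
      have hBeq : B j = {ω | Q i₀ ω < M ω} := by
        rw [hBdef]
        ext ω
        simp only [strictMinEv, ← htdef, Set.mem_iInter, Set.mem_setOf_eq, hMdef]
        rw [Finset.lt_inf'_iff]
        constructor
        · intro h i _; exact h i.1 i.2
        · intro h i hi; exact h ⟨i, hi⟩ (Finset.mem_attach _ _)
      rw [hBeq, indep_exp_lt hQi₀ hMmeas hQM hi₀ hbpos (hQdist i₀ hi₀) hlawM, hbsum]
      rw [show y i₀ + (1 - y i₀) = 1 by ring, div_one]
  -- combine
  have key : ∀ j ∈ s, μ (A j ∩ B j) = μ (A j) * ENNReal.ofReal (y i₀) := fun j hj => by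
    rw [hfact j hj, hBval j hj]
  have hABpd : (↑s : Set C).PairwiseDisjoint (fun j => A j ∩ B j) :=
    fun j hj j' hj' hne =>
      Disjoint.mono Set.inter_subset_left Set.inter_subset_left (hApd hj hj' hne)
  have hsumAB : ∑ j ∈ s, μ (A j ∩ B j) = ENNReal.ofReal (y i₀) := by
    rw [Finset.sum_congr rfl key, ← Finset.sum_mul, hsumA, one_mul]
  -- lower bound
  have hOlow : ⋃ j ∈ s, (A j ∩ B j) ⊆ O := by
    intro ω hω
    obtain ⟨j, hjs, hA, hB⟩ : ∃ j, j ∈ s ∧ ω ∈ A j ∧ ω ∈ B j := by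
      obtain ⟨j, hjmem⟩ := Set.mem_iUnion.1 hω
      obtain ⟨hjs, hji⟩ := Set.mem_iUnion.1 hjmem
      exact ⟨j, hjs, hji.1, hji.2⟩
    rw [hAdef] at hA
    rw [hBdef] at hB
    show opens x (fun i => Q i ω) (fun j => R j ω) i₀
    have hfne : (facNbrs x j).Nonempty := ⟨i₀, hi₀fac hjs⟩
    refine ⟨j, ?_, ?_⟩
    · have harg : argminOn (fun j' => R j' ω) s hs = j :=
        argminOn_eq _ _ _ hjs (fun c hc => mem_strictMinEv.1 hA c hc)
      exact (dif_pos hs).trans (by rw [harg])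
    · have harg : argminOn (fun i => Q i ω) (facNbrs x j) hfne = i₀ :=
        argminOn_eq _ _ _ (hi₀fac hjs) (fun c hc => mem_strictMinEv.1 hB c hc)
      exact (dif_pos hfne).trans (by rw [harg])
  -- upper bound
  have hOup : O ⊆ ⋃ j ∈ s, (weakMinEv R s j ∩ weakMinEv Q (facNbrs x j) i₀) := by
    rintro ω ⟨j, h1, h2⟩
    have e1 : nextV x (fun i => Q i ω) (fun j => R j ω) (Sum.inl i₀)
        = some (Sum.inr (argminOn (fun j' => R j' ω) s hs)) := dif_pos hs
    rw [e1] at h1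
    have hj : argminOn (fun j' => R j' ω) s hs = j := Sum.inr_injective (Option.some.inj h1)
    have hjs : j ∈ s := hj ▸ argminOn_mem _ s hs
    refine Set.mem_biUnion hjs ⟨?_, ?_⟩
    · refine mem_weakMinEv.2 fun j' hj' => ?_
      have := argminOn_le (fun j' => R j' ω) s hs (Finset.mem_of_mem_erase hj')
      rwa [hj] at this
    · rcases Finset.eq_empty_or_nonempty (facNbrs x j) with hf | hf
      · rw [show nextV x (fun i => Q i ω) (fun j => R j ω) (Sum.inr j) = none from
          dif_neg (by rw [hf]; exact Finset.not_nonempty_empty)] at h2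
        exact absurd h2 (by simp)
      · have e2 : nextV x (fun i => Q i ω) (fun j => R j ω) (Sum.inr j)
            = some (Sum.inl (argminOn (fun i => Q i ω) (facNbrs x j) hf)) := dif_pos hf
        rw [e2] at h2
        have hieq : argminOn (fun i => Q i ω) (facNbrs x j) hf = i₀ :=
          Sum.inl_injective (Option.some.inj h2)
        refine mem_weakMinEv.2 fun i hi => ?_
        have := argminOn_le (fun i => Q i ω) (facNbrs x j) hf (Finset.mem_of_mem_erase hi)
        rwa [hieq] at this
  -- conclude
  have hlow : ENNReal.ofReal (y i₀) ≤ μ O := by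
    calc ENNReal.ofReal (y i₀) = ∑ j ∈ s, μ (A j ∩ B j) := hsumAB.symm
      _ = μ (⋃ j ∈ s, (A j ∩ B j)) :=
          (measure_biUnion_finset hABpd fun j hj => (hAmeas j).inter (hBmeas j)).symm
      _ ≤ μ O := measure_mono hOlow
  have hup : μ O ≤ ENNReal.ofReal (y i₀) := by
    have hsubtie : ∀ j ∈ s, weakMinEv R s j ∩ weakMinEv Q (facNbrs x j) i₀
        ⊆ (A j ∩ B j) ∪ (tieEv R s ∪ tieEv Q (facNbrs x j)) := by
      intro j hj ω hω
      obtain ⟨hwA, hwB⟩ := hω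
      rcases weakMinEv_subset hj hwA with hA' | hT
      · rcases weakMinEv_subset (hi₀fac hj) hwB with hB' | hT
        · exact Or.inl ⟨by rw [hAdef]; exact hA', by rw [hBdef]; exact hB'⟩
        · exact Or.inr (Or.inr hT)
      · exact Or.inr (Or.inl hT)
    calc μ O ≤ μ (⋃ j ∈ s, (weakMinEv R s j ∩ weakMinEv Q (facNbrs x j) i₀)) :=
          measure_mono hOup
      _ ≤ ∑ j ∈ s, μ (weakMinEv R s j ∩ weakMinEv Q (facNbrs x j) i₀) :=
          measure_biUnion_finset_le s _
      _ ≤ ∑ j ∈ s, μ (A j ∩ B j) := by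
          refine Finset.sum_le_sum fun j hj => ?_
          refine le_trans (measure_mono (hsubtie j hj)) ?_
          refine le_trans (measure_union_le _ _) ?_
          have hz : μ (tieEv R s ∪ tieEv Q (facNbrs x j)) = 0 := by
            refine le_antisymm (le_trans (measure_union_le _ _) ?_) zero_le
            rw [hTieR0, hTieQ0 j, add_zero]
          rw [hz, add_zero]
      _ = ENNReal.ofReal (y i₀) := hsumAB
  exact le_antisymm hup hlow

end EventHelpers

/-- The probability that the rounding algorithm opens facility `i₀` is at most `y i₀`, with
equality when `i₀` has a neighbor in the support graph. -/
theorem opening_probability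
    {F C : Type*} [Fintype F] [Fintype C] [DecidableEq F] [DecidableEq C]
    (x : F → C → ℝ) (y : F → ℝ) (hxy : Preprocessed x y)
    {Ω : Type*} [MeasurableSpace Ω] (μ : Measure Ω) [IsProbabilityMeasure μ]
    (Q : F → Ω → ℝ) (R : C → Ω → ℝ)
    (hQmeas : ∀ i : F, 0 < y i → Measurable (Q i))
    (hRmeas : ∀ j : C, Measurable (R j))
    (hindep : iIndepFun
      (fun v : {i : F // 0 < y i} ⊕ C => Sum.elim (fun i => Q i.1) R v) μ)
    (hQdist : ∀ i : F, (h : 0 < y i) → Measure.map (Q i) μ = expMeasure (y i))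
    (hRdist : ∀ j : C, Measure.map (R j) μ = expMeasure 1)
    (i₀ : F) :
    (μ {ω | opens x (fun i => Q i ω) (fun j => R j ω) i₀}).toReal ≤ y i₀ ∧
    ((cliNbrs x i₀).Nonempty →
      (μ {ω | opens x (fun i => Q i ω) (fun j => R j ω) i₀}).toReal = y i₀) := by
  have hle : 0 ≤ y i₀ := (hxy.2.1 i₀).1
  constructor
  · by_cases hs : (cliNbrs x i₀).Nonempty
    · rw [open_prob_eq x y hxy μ Q R hQmeas hRmeas hindep hQdist hRdist i₀ hs,
        ENNReal.toReal_ofReal hle]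
    · have hO : {ω | opens x (fun i => Q i ω) (fun j => R j ω) i₀} = ∅ := by
        ext ω
        simp only [Set.mem_setOf_eq, Set.mem_empty_iff_false, iff_false]
        rintro ⟨j, h1, h2⟩
        rw [show nextV x (fun i => Q i ω) (fun j => R j ω) (Sum.inl i₀) = none from
          dif_neg hs] at h1
        cases h1
      rw [hO, measure_empty]
      simpa using hle
  · intro hs
    rw [open_prob_eq x y hxy μ Q R hQmeas hRmeas hindep hQdist hRdist i₀ hs,
      ENNReal.toReal_ofReal hle]

end DFL4
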